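/- Let R = k[x₁,…,x_n] with k an F-finite field of characteristic p, let 𝔞 = ⟨g₁,…,g_m⟩ be an ideal of R, let z = z₁,…,z_m be new variables, and set G = z₁g₁ + ⋯ + z_m g_m ∈ R[z]. Then for every positive rational number t = k/q with k a positive integer and q a power of p, and every ideal 𝔟 of R: 𝔞^[k] ⊆ 𝔟^[q] if and only if G^k ∈ (𝔟 R[z])^[q]. -/

import Mathlib

open scoped BigOperators
set_option linter.unusedSectionVars false

/-- The `q`-th bracket power of an ideal: the ideal generated by `q`-th powers
of elements of `a`. -/
def bracketPow {R : Type*} [CommRing R] (a : Ideal R) (q : ℕ) : Ideal R :=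
  Ideal.span ((fun x => x ^ q) '' (a : Set R))

/-- The generalized `k`-th Frobenius power of an ideal, defined via the base-`p`
digits of `k`:  `𝔞^[k] = ∏ᵢ (𝔞^[pⁱ])^(kᵢ)` where `kᵢ = k / pⁱ % p` is the `i`-th
base-`p` digit of `k` (digits with index `> k` vanish, so the product below suffices). -/
def frobPow {R : Type*} [CommRing R] (p : ℕ) (a : Ideal R) (k : ℕ) : Ideal R :=
  ∏ i ∈ Finset.range (k + 1), bracketPow a (p ^ i) ^ (k / p ^ i % p)

section BP
variable {S : Type*} [CommRing S] (p : ℕ) [Fact p.Prime] [CharP S p]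

theorem bp_span (T : Set S) (e : ℕ) :
    bracketPow (Ideal.span T) (p ^ e) = Ideal.span ((fun x => x ^ p ^ e) '' T) := by
  apply le_antisymm
  · rw [bracketPow, Ideal.span_le]
    rintro _ ⟨y, hy, rfl⟩
    induction hy using Submodule.span_induction with
    | mem x hx => exact Ideal.subset_span ⟨x, hx, rfl⟩
    | zero =>
        simp only [zero_pow (pow_ne_zero e (Fact.out (p := p.Prime)).ne_zero)]
        exact zero_mem _
    | add x y _ _ hx hy =>
        show (x + y) ^ p ^ e ∈ _
        rw [add_pow_char_pow]
        exact add_mem hx hy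
    | smul r x _ hx =>
        show (r • x) ^ p ^ e ∈ _
        rw [smul_eq_mul, mul_pow]
        exact Ideal.mul_mem_left _ _ hx
  · exact Ideal.span_mono (Set.image_mono Ideal.subset_span)

theorem bp_def' (I : Ideal S) (e : ℕ) :
    bracketPow I (p ^ e) = Ideal.span ((fun x => x ^ p ^ e) '' (I : Set S)) := rfl

theorem bp_one (e : ℕ) : bracketPow (1 : Ideal S) (p ^ e) = 1 := by
  rw [Ideal.one_eq_top, Ideal.eq_top_iff_one]
  exact Ideal.subset_span ⟨1, by simp, by simp⟩

theorem bp_mul (I J : Ideal S) (e : ℕ) :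
    bracketPow (I * J) (p ^ e) = bracketPow I (p ^ e) * bracketPow J (p ^ e) := by
  conv_lhs => rw [← Ideal.span_eq I, ← Ideal.span_eq J, Ideal.span_mul_span', bp_span]
  rw [bp_def', bp_def', Ideal.span_mul_span']
  congr 1
  exact Set.image_mul (powMonoidHom (p ^ e) : S →* S)

theorem bp_pow (I : Ideal S) (d e : ℕ) :
    bracketPow (I ^ d) (p ^ e) = bracketPow I (p ^ e) ^ d := by
  induction d with
  | zero => simpa using bp_one p e
  | succ d ih => rw [pow_succ, bp_mul, ih, pow_succ]

theorem bp_bp (I : Ideal S) (e₁ e₂ : ℕ) :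
    bracketPow (bracketPow I (p ^ e₁)) (p ^ e₂) = bracketPow I (p ^ (e₁ + e₂)) := by
  rw [bp_def' p I e₁, bp_span, bp_def', Set.image_image]
  simp_rw [← pow_mul, ← pow_add]

theorem bp_prod {ι : Type*} (s : Finset ι) (F : ι → Ideal S) (e : ℕ) :
    bracketPow (∏ i ∈ s, F i) (p ^ e) = ∏ i ∈ s, bracketPow (F i) (p ^ e) := by
  induction s using Finset.cons_induction with
  | empty => simpa using bp_one p e
  | cons i s hi ih => rw [Finset.prod_cons, bp_mul, ih, Finset.prod_cons]

theorem bp_pow_one (I : Ideal S) : bracketPow I 1 = I := by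
  rw [bracketPow]
  simp [Ideal.span_eq]

end BP

open MvPolynomial

theorem prod_XC_pow {R : Type*} [CommSemiring R] {m : ℕ} (g : Fin m → R) (u : Fin m → ℕ) :
    ∏ i, (X i * C (g i)) ^ u i =
      monomial (Finsupp.equivFunOnFinite.symm u) (∏ i, g i ^ u i) := by
  simp_rw [mul_pow, ← map_pow, Finset.prod_mul_distrib, ← map_prod]
  rw [monomial_eq, mul_comm]
  congr 1
  rw [Finsupp.prod_fintype]
  · rfl
  · intro i; exact pow_zero _

theorem coeff_G_pow {R : Type*} [CommSemiring R] {m : ℕ} (g : Fin m → R) (k : ℕ)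
    (v : Fin m →₀ ℕ) :
    coeff v ((∑ i, X i * C (g i)) ^ k) =
      if ∑ i, v i = k then (Nat.multinomial Finset.univ v : R) * ∏ i, g i ^ v i else 0 := by
  rw [Finset.sum_pow_eq_sum_piAntidiag, coeff_sum]
  have h1 : ∀ u : Fin m → ℕ, coeff v ((Nat.multinomial Finset.univ u : MvPolynomial (Fin m) R)
      * ∏ i, (X i * C (g i)) ^ u i) =
      if u = ⇑v then (Nat.multinomial Finset.univ u : R) * ∏ i, g i ^ u i else 0 := by
    intro u
    rw [prod_XC_pow, ← map_natCast (C : R →+* MvPolynomial (Fin m) R), C_mul_monomial,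
      coeff_monomial]
    congr 1
    rw [eq_comm, Equiv.symm_apply_eq]
    rfl
  simp_rw [h1]
  rw [Finset.sum_ite_eq' (Finset.piAntidiag Finset.univ k) (⇑v)
    (fun u => (Nat.multinomial Finset.univ u : R) * ∏ i, g i ^ u i)]
  simp [Finset.mem_piAntidiag]

section CharPCoeff

variable {σ R : Type*} [CommRing R] (p : ℕ) [Fact p.Prime] [CharP R p]

theorem pow_p_eq_sum (f : MvPolynomial σ R) :
    f ^ p = ∑ v ∈ f.support, monomial (p • v) (coeff v f ^ p) := by
  conv_lhs => rw [as_sum f, ← frobenius_def, map_sum]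
  simp_rw [frobenius_def, monomial_pow]

theorem coeff_pow_p (f : MvPolynomial σ R) (w : σ →₀ ℕ) :
    coeff (p • w) (f ^ p) = coeff w f ^ p := by
  classical
  have hp : p ≠ 0 := (Fact.out (p := p.Prime)).ne_zero
  rw [pow_p_eq_sum p f, coeff_sum]
  simp_rw [coeff_monomial]
  by_cases hw : w ∈ f.support
  · rw [Finset.sum_eq_single_of_mem w hw]
    · rw [if_pos rfl]
    · intro v _ hv
      rw [if_neg]
      intro hvw
      apply hv
      ext i
      have := DFunLike.congr_fun hvw i
      simp only [Finsupp.smul_apply, smul_eq_mul] at this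
      exact Nat.eq_of_mul_eq_mul_left (Nat.pos_of_ne_zero hp) this
  · rw [Finset.sum_eq_zero, MvPolynomial.notMem_support_iff.mp hw, zero_pow hp]
    intro v hv
    rw [if_neg]
    intro hvw
    apply hw
    have : v = w := by
      ext i
      have := DFunLike.congr_fun hvw i
      simp only [Finsupp.smul_apply, smul_eq_mul] at this
      exact Nat.eq_of_mul_eq_mul_left (Nat.pos_of_ne_zero hp) this
    rwa [← this]

theorem coeff_pow_p_not_dvd (f : MvPolynomial σ R) (u : σ →₀ ℕ) (i : σ)
    (h : ¬ p ∣ u i) : coeff u (f ^ p) = 0 := by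
  classical
  rw [pow_p_eq_sum p f, coeff_sum]
  apply Finset.sum_eq_zero
  intro v _
  rw [coeff_monomial, if_neg]
  intro hvu
  apply h
  rw [← hvu]
  exact ⟨v i, rfl⟩

end CharPCoeff

noncomputable def fmod (p : ℕ) {m : ℕ} (v : Fin m →₀ ℕ) : Fin m →₀ ℕ :=
  Finsupp.mapRange (· % p) (Nat.zero_mod p) v

noncomputable def fdiv (p : ℕ) {m : ℕ} (v : Fin m →₀ ℕ) : Fin m →₀ ℕ :=
  Finsupp.mapRange (· / p) (Nat.zero_div p) v

theorem coeff_G_rec {R : Type*} [CommRing R] (p : ℕ) [Fact p.Prime] [CharP R p]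
    {m : ℕ} (g : Fin m → R) (k : ℕ) (v : Fin m →₀ ℕ) :
    coeff v ((∑ i, X i * C (g i)) ^ k) =
      coeff (fmod p v) ((∑ i, X i * C (g i)) ^ (k % p)) *
      coeff (fdiv p v) ((∑ i, X i * C (g i)) ^ (k / p)) ^ p := by
  classical
  have hp : 0 < p := (Fact.out (p := p.Prime)).pos
  set G : MvPolynomial (Fin m) R := ∑ i, X i * C (g i) with hGdef
  have hle : fmod p v ≤ v := by
    rw [Finsupp.le_def]
    intro i
    exact Nat.mod_le _ _
  have hsub : v - fmod p v = p • fdiv p v := by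
    ext i
    have h1 := Nat.div_add_mod (v i) p
    simp only [Finsupp.tsub_apply, Finsupp.smul_apply, smul_eq_mul, fmod, fdiv,
      Finsupp.mapRange_apply]
    omega
  have hsplit : G ^ k = G ^ (k % p) * (G ^ (k / p)) ^ p := by
    rw [← pow_mul, ← pow_add, Nat.mod_add_div']
  rw [hsplit, coeff_mul]
  rw [Finset.sum_eq_single_of_mem (fmod p v, v - fmod p v)]
  · rw [hsub, coeff_pow_p]
  · rw [Finset.HasAntidiagonal.mem_antidiagonal]
    exact add_tsub_cancel_of_le hle
  · rintro ⟨w, u⟩ hmem hne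
    rw [Finset.HasAntidiagonal.mem_antidiagonal] at hmem
    by_contra hz
    have hw : coeff w (G ^ (k % p)) ≠ 0 := fun h0 => hz (by
      rw [show ((w,u).1 : Fin m →₀ ℕ) = w from rfl, h0, zero_mul])
    have hu : coeff u ((G ^ (k / p)) ^ p) ≠ 0 := fun h0 => hz (by
      rw [show ((w,u).2 : Fin m →₀ ℕ) = u from rfl, h0, mul_zero])
    have hsum : ∑ i, w i = k % p := by
      by_contra hs
      rw [coeff_G_pow, if_neg hs] at hw
      exact hw rfl
    have hwlt : ∀ i, w i < p := by
      intro i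
      calc w i ≤ ∑ j, w j := Finset.single_le_sum (fun j _ => Nat.zero_le _) (Finset.mem_univ i)
      _ = k % p := hsum
      _ < p := Nat.mod_lt _ hp
    have hdvd : ∀ i, p ∣ u i := by
      intro i
      by_contra hd
      exact hu (coeff_pow_p_not_dvd p _ u i hd)
    have hwv : w = fmod p v := by
      ext i
      obtain ⟨c, hc⟩ := hdvd i
      have hvi : v i = w i + p * c := by
        rw [← DFunLike.congr_fun hmem i, Finsupp.add_apply, hc]
      simp only [fmod, Finsupp.mapRange_apply, hvi]
      rw [Nat.add_mul_mod_self_left, Nat.mod_eq_of_lt (hwlt i)]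
    apply hne
    ext : 1
    · exact hwv
    · show u = v - fmod p v
      rw [← hwv, ← hmem]
      simp

section Main

variable {K : Type*} [Field K] (p : ℕ) [Fact p.Prime] [CharP K p]
  {n m : ℕ} (g : Fin m → MvPolynomial (Fin n) K)

/-- The ideal of coefficients of `G ^ k`. -/
noncomputable def ci (k : ℕ) : Ideal (MvPolynomial (Fin n) K) :=
  Ideal.span (Set.range fun v : Fin m →₀ ℕ => coeff v ((∑ i, X i * C (g i)) ^ k))

theorem ci_zero : ci (K := K) g 0 = ⊤ := by
  rw [Ideal.eq_top_iff_one]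
  apply Ideal.subset_span
  exact ⟨0, by simp⟩

theorem ci_rec (k : ℕ) :
    ci (K := K) g k = ci g (k % p) * bracketPow (ci g (k / p)) p := by
  classical
  have hp : 0 < p := (Fact.out (p := p.Prime)).pos
  have hbp : bracketPow (ci (K := K) g (k / p)) p =
      Ideal.span (Set.range fun u : Fin m →₀ ℕ =>
        coeff u ((∑ i, X i * C (g i)) ^ (k / p)) ^ p) := by
    have := bp_span (S := MvPolynomial (Fin n) K) p
      (Set.range fun u : Fin m →₀ ℕ => coeff u ((∑ i, X i * C (g i)) ^ (k / p))) 1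
    rw [pow_one] at this
    rw [ci, this, ← Set.range_comp]
    rfl
  apply le_antisymm
  · rw [ci, Ideal.span_le]
    rintro _ ⟨v, rfl⟩
    show coeff v ((∑ i, X i * C (g i)) ^ k) ∈ _
    rw [coeff_G_rec p g k v]
    apply Ideal.mul_mem_mul
    · exact Ideal.subset_span ⟨fmod p v, rfl⟩
    · rw [hbp]
      exact Ideal.subset_span ⟨fdiv p v, rfl⟩
  · rw [ci, hbp, ci, Ideal.span_mul_span', Ideal.span_le]
    rintro _ ⟨_, ⟨w, rfl⟩, _, ⟨u, rfl⟩, rfl⟩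
    show coeff w ((∑ i, X i * C (g i)) ^ (k % p)) *
      coeff u ((∑ i, X i * C (g i)) ^ (k / p)) ^ p ∈ _
    by_cases hs : ∑ i, w i = k % p
    · have hwlt : ∀ i, w i < p := by
        intro i
        calc w i ≤ ∑ j, w j := Finset.single_le_sum (fun j _ => Nat.zero_le _)
              (Finset.mem_univ i)
        _ = k % p := hs
        _ < p := Nat.mod_lt _ hp
      set v : Fin m →₀ ℕ := w + p • u with hv
      have hmod : fmod p v = w := by
        ext i
        simp only [fmod, Finsupp.mapRange_apply, hv, Finsupp.add_apply, Finsupp.smul_apply,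
          smul_eq_mul]
        rw [Nat.add_mul_mod_self_left, Nat.mod_eq_of_lt (hwlt i)]
      have hdiv : fdiv p v = u := by
        ext i
        simp only [fdiv, Finsupp.mapRange_apply, hv, Finsupp.add_apply, Finsupp.smul_apply,
          smul_eq_mul]
        rw [Nat.add_mul_div_left _ _ hp, Nat.div_eq_of_lt (hwlt i), zero_add]
      have := coeff_G_rec p g k v
      rw [hmod, hdiv] at this
      rw [← this]
      exact Ideal.subset_span ⟨v, rfl⟩
    · rw [coeff_G_pow, if_neg hs, zero_mul]
      exact zero_mem _

theorem sum_single_one {m : ℕ} (j : Fin m) :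
    ∑ i, (Finsupp.single j 1 : Fin m →₀ ℕ) i = 1 := by
  simp [Finsupp.single_apply, Finset.sum_ite_eq]

theorem prod_pow_single {R : Type*} [CommMonoid R] {m : ℕ} (g : Fin m → R) (j : Fin m) :
    ∏ i, g i ^ (Finsupp.single j 1 : Fin m →₀ ℕ) i = g j := by
  simp only [Finsupp.single_apply]
  rw [Finset.prod_eq_single_of_mem j (Finset.mem_univ j)]
  · rw [if_pos rfl, pow_one]
  · intro i _ hij
    rw [if_neg (Ne.symm hij), pow_zero]

theorem span_range_pow (d : ℕ) :
    Ideal.span (Set.range g) ^ d =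
      Ideal.span {x | ∃ v : Fin m →₀ ℕ, (∑ i, v i) = d ∧ x = ∏ i, g i ^ v i} := by
  classical
  induction d with
  | zero =>
      rw [pow_zero, eq_comm, Ideal.one_eq_top, Ideal.eq_top_iff_one]
      exact Ideal.subset_span ⟨0, by simp, by simp⟩
  | succ d ih =>
      rw [pow_succ, ih, Ideal.span_mul_span']
      apply le_antisymm
      · rw [Ideal.span_le]
        rintro _ ⟨_, ⟨v, hv, rfl⟩, _, ⟨j, rfl⟩, rfl⟩
        apply Ideal.subset_span
        refine ⟨v + Finsupp.single j 1, ?_, ?_⟩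
        · simp only [Finsupp.add_apply, Finset.sum_add_distrib, hv]
          rw [sum_single_one j]
        · simp only [Finsupp.add_apply, pow_add, Finset.prod_mul_distrib]
          congr 1
          exact (prod_pow_single g j).symm
      · rw [Ideal.span_le]
        rintro _ ⟨w, hw, rfl⟩
        have hw0 : w ≠ 0 := by
          intro h0
          subst h0
          simp at hw
        obtain ⟨j, hj⟩ := Finsupp.ne_iff.mp hw0
        rw [Finsupp.coe_zero, Pi.zero_apply] at hj
        set v : Fin m →₀ ℕ := w - Finsupp.single j 1 with hvdef
        have hwv : w = v + Finsupp.single j 1 := by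
          ext i
          simp only [hvdef, Finsupp.add_apply, Finsupp.tsub_apply, Finsupp.single_apply]
          by_cases hij : j = i
          · subst hij; simp; omega
          · rw [if_neg hij]; omega
        have hsum : ∑ i, v i = d := by
          have : ∑ i, w i = (∑ i, v i) + 1 := by
            rw [hwv]
            simp only [Finsupp.add_apply, Finset.sum_add_distrib]
            congr 1
            exact sum_single_one j
          omega
        have hprod : ∏ i, g i ^ w i = (∏ i, g i ^ v i) * g j := by
          rw [hwv]
          simp only [Finsupp.add_apply, pow_add, Finset.prod_mul_distrib]
          congr 1
          exact prod_pow_single g j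
        rw [hprod]
        exact Ideal.subset_span ⟨_, ⟨v, hsum, rfl⟩, _, ⟨j, rfl⟩, rfl⟩

theorem ci_lt_p (d : ℕ) (hd : d < p) :
    ci (K := K) g d = Ideal.span (Set.range g) ^ d := by
  classical
  rw [span_range_pow]
  apply le_antisymm
  · rw [ci, Ideal.span_le]
    rintro _ ⟨v, rfl⟩
    show coeff v ((∑ i, X i * C (g i)) ^ d) ∈ _
    rw [coeff_G_pow]
    by_cases hs : ∑ i, v i = d
    · rw [if_pos hs]
      exact Ideal.mul_mem_left _ _ (Ideal.subset_span ⟨v, hs, rfl⟩)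
    · rw [if_neg hs]
      exact zero_mem _
  · rw [Ideal.span_le]
    rintro _ ⟨v, hv, rfl⟩
    have hmult : (Nat.multinomial Finset.univ v : K) ≠ 0 := by
      rw [Ne, CharP.cast_eq_zero_iff K p]
      intro hdvd
      have h1 : (Nat.multinomial Finset.univ ⇑v) ∣ Nat.factorial (∑ i, v i) :=
        ⟨∏ i, Nat.factorial (v i), ((mul_comm _ _).trans (Nat.multinomial_spec _ _)).symm⟩
      have h2 : p ∣ Nat.factorial (∑ i, v i) := dvd_trans hdvd h1
      have h3 : p ≤ ∑ i, v i := (Nat.Prime.dvd_factorial (Fact.out (p := p.Prime))).mp h2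
      omega
    have key : coeff v ((∑ i, X i * C (g i)) ^ d) =
        C (Nat.multinomial Finset.univ v : K) * ∏ i, g i ^ v i := by
      rw [coeff_G_pow, if_pos hv, ← map_natCast (C : K →+* MvPolynomial (Fin n) K)]
    have heq : ∏ i, g i ^ v i =
        C ((Nat.multinomial Finset.univ v : K)⁻¹) * coeff v ((∑ i, X i * C (g i)) ^ d) := by
      rw [key, ← mul_assoc, ← map_mul, inv_mul_cancel₀ hmult, map_one, one_mul]
    rw [heq]
    exact Ideal.mul_mem_left _ _ (Ideal.subset_span ⟨v, rfl⟩)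

theorem frobPow_rec (a : Ideal (MvPolynomial (Fin n) K)) (k : ℕ) (hk : 0 < k) :
    frobPow p a k = a ^ (k % p) * bracketPow (frobPow p a (k / p)) p := by
  classical
  have hp2 : 2 ≤ p := (Fact.out (p := p.Prime)).two_le
  rw [frobPow, Finset.prod_range_succ']
  have h0 : bracketPow a (p ^ 0) ^ (k / p ^ 0 % p) = a ^ (k % p) := by
    rw [pow_zero, bp_pow_one, Nat.div_one]
  have hterm : ∀ j, bracketPow a (p ^ (j + 1)) ^ (k / p ^ (j + 1) % p) =
      bracketPow (bracketPow a (p ^ j) ^ (k / p / p ^ j % p)) (p ^ 1) := by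
    intro j
    rw [bp_pow, bp_bp]
    congr 2
    rw [pow_succ', Nat.div_div_eq_div_mul]
  rw [h0, mul_comm]
  congr 1
  simp_rw [hterm]
  rw [← bp_prod, pow_one]
  congr 1
  symm
  rw [show frobPow p a (k / p) = ∏ i ∈ Finset.range (k / p + 1),
    bracketPow a (p ^ i) ^ (k / p / p ^ i % p) from rfl]
  apply Finset.prod_subset
  · apply Finset.range_subset_range.mpr
    have := Nat.div_lt_self hk (lt_of_lt_of_le one_lt_two hp2)
    omega
  · intro j hj hj'
    rw [Finset.mem_range] at hj
    rw [Finset.mem_range, not_lt] at hj'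
    have h2j : k / p < 2 ^ j := by
      have := Nat.lt_two_pow_self (n := j)
      omega
    have hlt : k / p < p ^ j :=
      lt_of_lt_of_le h2j (Nat.pow_le_pow_left hp2 j)
    rw [Nat.div_eq_of_lt hlt, Nat.zero_mod, pow_zero]

theorem frobPow_eq_ci (a : Ideal (MvPolynomial (Fin n) K))
    (ha : a = Ideal.span (Set.range g)) (k : ℕ) :
    frobPow p a k = ci (K := K) g k := by
  induction k using Nat.strong_induction_on with
  | _ k IH =>
    rcases Nat.eq_zero_or_pos k with rfl | hk
    · rw [ci_zero]
      rw [frobPow]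
      simp
    · have hp2 : 2 ≤ p := (Fact.out (p := p.Prime)).two_le
      have hdiv : k / p < k := Nat.div_lt_self hk (by omega)
      rw [frobPow_rec p a k hk, IH (k / p) hdiv, ha,
        ← ci_lt_p p g (k % p) (Nat.mod_lt _ (by omega)), ci_rec p g k]

end Main

/-- For `R = K[x₁,…,xₙ]` over an F-finite field `K` of characteristic
`p`, `𝔞 = ⟨g₁,…,g_m⟩`, and the generic linear combination `G = z₁g₁ + ⋯ + z_m g_m` in
`R[z] = R[z₁,…,z_m]`: for every positive `t = k/q` (with `k > 0` and `q = pᵉ`) and every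
ideal `𝔟` of `R`, `𝔞^[k] ⊆ 𝔟^[q]` if and only if `G^k ∈ (𝔟 R[z])^[q]`. -/
theorem stmt_19 {K : Type*} [Field K] (p : ℕ) [Fact p.Prime] [CharP K p]
    (hFfin : (frobenius K p).Finite)
    {n m : ℕ} (g : Fin m → MvPolynomial (Fin n) K)
    (a : Ideal (MvPolynomial (Fin n) K)) (ha : a = Ideal.span (Set.range g))
    (G : MvPolynomial (Fin m) (MvPolynomial (Fin n) K))
    (hG : G = ∑ i, MvPolynomial.X i * MvPolynomial.C (g i))
    (k e : ℕ) (hk : 0 < k) (b : Ideal (MvPolynomial (Fin n) K)) :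
    frobPow p a k ≤ bracketPow b (p ^ e) ↔
      G ^ k ∈ bracketPow (Ideal.map (MvPolynomial.C :
        MvPolynomial (Fin n) K →+* MvPolynomial (Fin m) (MvPolynomial (Fin n) K)) b)
        (p ^ e) := by
  have hmap : bracketPow (Ideal.map (MvPolynomial.C :
      MvPolynomial (Fin n) K →+* MvPolynomial (Fin m) (MvPolynomial (Fin n) K)) b) (p ^ e)
      = Ideal.map (MvPolynomial.C :
        MvPolynomial (Fin n) K →+* MvPolynomial (Fin m) (MvPolynomial (Fin n) K))
        (bracketPow b (p ^ e)) := by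
    conv_lhs => rw [← Ideal.span_eq b, Ideal.map_span, bp_span]
    rw [bp_def', Ideal.map_span, Set.image_image, Set.image_image]
    simp_rw [map_pow]
  rw [hmap, MvPolynomial.mem_map_C_iff, frobPow_eq_ci p g a ha k, ci, Ideal.span_le, hG]
  constructor
  · intro h v
    exact h ⟨v, rfl⟩
  · rintro h _ ⟨v, rfl⟩
    exact h v
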